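/- Let P(s) = \sum_{k=1}^m a_k k^{-s} with a_1 \neq 0, let r \in \mathbb{R}, \kappa_r(x) = \sum_{k \le x} a_k k^{-(r-1/2)}, and d_{n,r}^2 = \inf_{b_1,\ldots,b_n \in \mathbb{C}} \int_0^\infty |\mathbf{1}_{(0,1)}(x) - \sum_{k=1}^n b_k \kappa_r(1/(kx))|^2 dx. If \lim_{n \to \infty} d_{n,r} = 0, then P(s) \neq 0 for all s with \Re(s) > r. -/

import Mathlib

open Finset Filter Topology MeasureTheory

/-- `κ_r(x) = ∑_{1 ≤ k ≤ x} a_k k^{-(r-1/2)}` -/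
noncomputable def kappa (a : ℕ → ℂ) (r : ℝ) (x : ℝ) : ℂ :=
  ∑ k ∈ Finset.Icc 1 ⌊x⌋₊, a k / (k : ℂ) ^ ((r : ℂ) - 1/2)

/-- The square of the Báez-Duarte distance `d_{n,r}`: the squared `L²(0,∞)` distance from the
indicator of `(0,1)` to the span of `x ↦ κ_r(1/(kx))`, `k = 1, …, n`. -/
noncomputable def baezDuarteDistSq (a : ℕ → ℂ) (r : ℝ) (n : ℕ) : ℝ :=
  ⨅ b : Fin n → ℂ, ∫ x in Set.Ioi (0 : ℝ),
    ‖Set.indicator (Set.Ioo (0 : ℝ) 1) (fun _ => (1 : ℂ)) x -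
      ∑ k : Fin n, b k * kappa a r (1 / (((k : ℕ) + 1 : ℕ) * x))‖ ^ 2

namespace BaezDuarteAux

theorem sum_cut (m : ℕ) (c : ℕ → ℂ) (hc : ∀ k, m < k → c k = 0) (K : ℕ) :
    ∑ j ∈ Icc 1 K, c j = ∑ j ∈ Icc 1 m, if j ≤ K then c j else 0 := by
  have h1 : ∑ j ∈ Icc 1 K, c j = ∑ j ∈ Icc 1 (max m K), if j ≤ K then c j else 0 := by
    rw [← Finset.sum_subset (Finset.Icc_subset_Icc le_rfl (le_max_right m K))]
    · exact Finset.sum_congr rfl fun j hj => (if_pos (Finset.mem_Icc.1 hj).2).symm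
    · intro x hx hx'
      rw [if_neg]
      intro hxK
      exact hx' (Finset.mem_Icc.2 ⟨(Finset.mem_Icc.1 hx).1, hxK⟩)
  have h2 : ∑ j ∈ Icc 1 m, (if j ≤ K then c j else 0) =
      ∑ j ∈ Icc 1 (max m K), if j ≤ K then c j else 0 := by
    rw [← Finset.sum_subset (Finset.Icc_subset_Icc le_rfl (le_max_left m K))]
    intro x hx hx'
    have hxm : m < x := by
      by_contra h
      exact hx' (Finset.mem_Icc.2 ⟨(Finset.mem_Icc.1 hx).1, by omega⟩)
    simp [hc x hxm]
  rw [h1, h2]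

theorem kappa_eq (a : ℕ → ℂ) (r : ℝ) (m : ℕ) (ha : ∀ k, m < k → a k = 0)
    (y : ℝ) (hy : 0 ≤ y) :
    kappa a r y = ∑ j ∈ Icc 1 m, if (j:ℝ) ≤ y then a j / (j : ℂ) ^ ((r : ℂ) - 1/2) else 0 := by
  rw [kappa, sum_cut m _ (fun k hk => by simp [ha k hk]) ⌊y⌋₊]
  exact Finset.sum_congr rfl fun j _ => by
    simp only [if_congr (Nat.le_floor_iff hy) rfl rfl]

theorem integrable_Ft (w : ℂ) (hw : 1/2 < w.re) (t : ℝ) :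
    Integrable (Set.indicator (Set.Ioc 0 t) (fun x => (x:ℂ)^(w-1)))
      (volume.restrict (Set.Ioi 0)) := by
  rw [integrable_indicator_iff measurableSet_Ioc, IntegrableOn,
    Measure.restrict_restrict measurableSet_Ioc,
    Set.inter_eq_left.2 (Set.Ioc_subset_Ioi_self)]
  exact (intervalIntegral.intervalIntegrable_cpow' (by simp; linarith)).1

theorem integral_Ft (w : ℂ) (hw : 1/2 < w.re) (t : ℝ) (ht : 0 < t) :
    ∫ x in Set.Ioi (0:ℝ), Set.indicator (Set.Ioc 0 t) (fun x => (x:ℂ)^(w-1)) x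
      = (t:ℂ)^w/w := by
  rw [integral_indicator measurableSet_Ioc, Measure.restrict_restrict measurableSet_Ioc,
    Set.inter_eq_left.2 (Set.Ioc_subset_Ioi_self),
    ← intervalIntegral.integral_of_le ht.le,
    integral_cpow (Or.inl (by simp; linarith))]
  have hw0 : w ≠ 0 := fun h => by simp [h] at hw; linarith
  rw [sub_add_cancel, Complex.ofReal_zero, Complex.zero_cpow hw0, sub_zero]

theorem mul_psi_eq (w : ℂ) (t : ℝ) (ht1 : t ≤ 1) (c : ℂ) (x : ℝ) (hx : x ≠ 1) :
    (if x ≤ t then c else 0) *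
      Set.indicator (Set.Ioo (0:ℝ) 1) (fun x => (x:ℂ)^(w-1)) x
      = c * Set.indicator (Set.Ioc 0 t) (fun x => (x:ℂ)^(w-1)) x := by
  by_cases hxt : x ≤ t
  · rw [if_pos hxt]
    congr 1
    simp only [Set.indicator_apply, Set.mem_Ioo, Set.mem_Ioc]
    have hx1 : x ≤ t → x < 1 := fun h => lt_of_le_of_ne (h.trans ht1) hx
    by_cases h0 : 0 < x
    · rw [if_pos ⟨h0, hx1 hxt⟩, if_pos ⟨h0, hxt⟩]
    · rw [if_neg (fun h => h0 h.1), if_neg (fun h => h0 h.1)]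
  · rw [if_neg hxt, Set.indicator_of_notMem (fun h : x ∈ Set.Ioc 0 t => hxt h.2), mul_zero,
      zero_mul]

theorem cpow_one_div_mul (j k : ℕ) (hj : 1 ≤ j) (hk : 1 ≤ k) (w : ℂ) :
    (((1 / ((j:ℝ) * k)):ℝ):ℂ) ^ w = (j:ℂ) ^ (-w) * (k:ℂ) ^ (-w) := by
  have hj' : (0:ℝ) < j := by exact_mod_cast Nat.pos_of_ne_zero (by omega)
  have hk' : (0:ℝ) < k := by exact_mod_cast Nat.pos_of_ne_zero (by omega)
  rw [one_div, Complex.ofReal_inv,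
    Complex.inv_cpow _ _ (by
      rw [Complex.arg_ofReal_of_nonneg (by positivity)]; exact Real.pi_ne_zero.symm),
    Complex.ofReal_mul, Complex.mul_cpow_ofReal_nonneg hj'.le hk'.le,
    Complex.cpow_neg, Complex.cpow_neg, mul_inv]
  norm_cast

end BaezDuarteAux

open BaezDuarteAux in
set_option maxHeartbeats 1000000 in
theorem baezDuarte_dist_tendsto_zero_implies_zero_free (m : ℕ) (hm : 1 ≤ m) (a : ℕ → ℂ)
    (ha1 : a 1 ≠ 0) (ha : ∀ k, m < k → a k = 0) (r : ℝ)
    (hd : Tendsto (fun n : ℕ => Real.sqrt (baezDuarteDistSq a r n)) atTop (𝓝 0)) :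
    ∀ s : ℂ, r < s.re → (∑ k ∈ Finset.Icc 1 m, a k * (k : ℂ) ^ (-s)) ≠ 0 := by
  intro s hs hP
  classical
  set μ : Measure ℝ := volume.restrict (Set.Ioi (0:ℝ)) with hμ
  set w : ℂ := s - (r:ℂ) + 1/2 with hwdef
  have hwre : w.re = s.re - r + 1/2 := by
    simp [hwdef, Complex.add_re, Complex.sub_re, Complex.ofReal_re]
  have hw : 1/2 < w.re := by rw [hwre]; linarith
  have hw0 : w ≠ 0 := fun h => by rw [h] at hwre; simp at hwre; linarith
  set ψ : ℝ → ℂ := Set.indicator (Set.Ioo (0:ℝ) 1) (fun x => (x:ℂ)^(w-1)) with hψdef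
  set c : ℕ → ℂ := fun j => a j / (j:ℂ) ^ ((r:ℂ) - 1/2) with hcdef
  have hae1 : ∀ᵐ x ∂μ, x ≠ (1:ℝ) := by
    refine ae_restrict_of_ae ?_
    rw [ae_iff]
    have : {x:ℝ | ¬ x ≠ 1} = {1} := by ext; simp
    rw [this]; exact measure_singleton 1
  -- pairing with a single cut function
  have hcut_int : ∀ (t : ℝ) (d : ℂ), t ≤ 1 →
      Integrable (fun x => (if x ≤ t then d else 0) * ψ x) μ := by
    intro t d ht1
    refine ((integrable_Ft w hw t).const_mul d).congr ?_
    filter_upwards [hae1] with x hx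
    exact (mul_psi_eq w t ht1 d x hx).symm
  have hcut_val : ∀ (t : ℝ) (d : ℂ), 0 < t → t ≤ 1 →
      ∫ x, (if x ≤ t then d else 0) * ψ x ∂μ = d * ((t:ℂ)^w / w) := by
    intro t d ht ht1
    calc ∫ x, (if x ≤ t then d else 0) * ψ x ∂μ
        = ∫ x, d * Set.indicator (Set.Ioc 0 t) (fun x => (x:ℂ)^(w-1)) x ∂μ :=
          integral_congr_ae (by
            filter_upwards [hae1] with x hx; exact mul_psi_eq w t ht1 d x hx)
      _ = d * ((t:ℂ)^w/w) := by
          rw [integral_const_mul, hμ, integral_Ft w hw t ht]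
  -- the indicator pairing
  have hind_mul : ∀ x : ℝ,
      Set.indicator (Set.Ioo (0:ℝ) 1) (fun _ => (1:ℂ)) x * ψ x = ψ x := by
    intro x
    by_cases h : x ∈ Set.Ioo (0:ℝ) 1
    · rw [Set.indicator_of_mem h, one_mul]
    · rw [Set.indicator_of_notMem h, zero_mul, hψdef, Set.indicator_of_notMem h]
  have hone_mul : ∀ x : ℝ, (if x ≤ (1:ℝ) then (1:ℂ) else 0) * ψ x = ψ x := by
    intro x
    by_cases h : x ≤ (1:ℝ)
    · rw [if_pos h, one_mul]
    · rw [if_neg h, zero_mul, hψdef,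
        Set.indicator_of_notMem (fun hmem : x ∈ Set.Ioo (0:ℝ) 1 => h hmem.2.le)]
  have hψ_int : Integrable ψ μ :=
    (hcut_int 1 1 le_rfl).congr (ae_of_all _ fun x => hone_mul x)
  have hψ_val : ∫ x, ψ x ∂μ = 1/w := by
    rw [← integral_congr_ae (ae_of_all _ fun x => hone_mul x), hcut_val 1 1 one_pos le_rfl]
    rw [Complex.ofReal_one, Complex.one_cpow, one_mul, one_div]
  -- kappa decomposition
  have hkap : ∀ (K : ℕ), 1 ≤ K → ∀ x : ℝ, 0 < x →
      kappa a r (1/(K*x)) = ∑ j ∈ Icc 1 m, if x ≤ 1/((j:ℝ)*K) then c j else 0 := by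
    intro K hK x hx
    have hK' : (0:ℝ) < K := by exact_mod_cast Nat.pos_of_ne_zero (by omega)
    rw [kappa_eq a r m ha _ (by positivity)]
    refine Finset.sum_congr rfl fun j hj => ?_
    have hj1 : 1 ≤ j := (Finset.mem_Icc.1 hj).1
    have hj' : (0:ℝ) < j := by exact_mod_cast Nat.pos_of_ne_zero (by omega)
    have hiff : ((j:ℝ) ≤ 1/(K*x)) ↔ (x ≤ 1/((j:ℝ)*K)) := by
      rw [le_div_iff₀ (by positivity), le_div_iff₀ (by positivity)]
      constructor <;> intro h <;> nlinarith
    simp only [hcdef, if_congr hiff rfl rfl]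
  have htle : ∀ (j K : ℕ), 1 ≤ j → 1 ≤ K → (0:ℝ) < 1/((j:ℝ)*K) ∧ 1/((j:ℝ)*K) ≤ 1 := by
    intro j K hj hK
    have hj' : (1:ℝ) ≤ j := by exact_mod_cast hj
    have hK' : (1:ℝ) ≤ K := by exact_mod_cast hK
    constructor
    · positivity
    · rw [div_le_one (by positivity)]
      nlinarith
  have hkap_ae : ∀ K : ℕ, 1 ≤ K → (fun x => kappa a r (1/(K*x)) * ψ x) =ᵐ[μ]
      (fun x => ∑ j ∈ Icc 1 m, (if x ≤ 1/((j:ℝ)*K) then c j else 0) * ψ x) := by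
    intro K hK
    filter_upwards [ae_restrict_mem measurableSet_Ioi] with x hx
    rw [hkap K hK x hx, Finset.sum_mul]
  have hkap_int : ∀ K : ℕ, 1 ≤ K →
      Integrable (fun x => kappa a r (1/(K*x)) * ψ x) μ := by
    intro K hK
    exact (integrable_finset_sum _ fun j hj =>
      hcut_int _ _ (htle j K (Finset.mem_Icc.1 hj).1 hK).2).congr (hkap_ae K hK).symm
  have hterm : ∀ (K : ℕ), 1 ≤ K → ∀ j ∈ Icc 1 m,
      c j * ((((1/((j:ℝ)*K)) : ℝ):ℂ)^w / w) = a j * (j:ℂ)^(-s) * ((K:ℂ)^(-w)/w) := by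
    intro K hK j hj
    have hj1 : 1 ≤ j := (Finset.mem_Icc.1 hj).1
    have hj0 : (j:ℂ) ≠ 0 := Nat.cast_ne_zero.2 (by omega)
    have h2 : (j:ℂ) ^ (-((r:ℂ) - 1/2)) * (j:ℂ) ^ (-w) = (j:ℂ) ^ (-s) := by
      rw [← Complex.cpow_add _ _ hj0]
      congr 1
      rw [hwdef]; ring
    rw [cpow_one_div_mul j K hj1 hK w]
    simp only [hcdef]
    rw [div_eq_mul_inv (a j), ← Complex.cpow_neg]
    calc a j * (j:ℂ) ^ (-((r:ℂ) - 1/2)) * ((j:ℂ) ^ (-w) * (K:ℂ) ^ (-w) / w)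
        = a j * ((j:ℂ) ^ (-((r:ℂ) - 1/2)) * (j:ℂ) ^ (-w)) * ((K:ℂ) ^ (-w) / w) := by ring
      _ = a j * (j:ℂ) ^ (-s) * ((K:ℂ) ^ (-w) / w) := by rw [h2]
  have hkap_val : ∀ K : ℕ, 1 ≤ K →
      ∫ x, kappa a r (1/(K*x)) * ψ x ∂μ = 0 := by
    intro K hK
    rw [integral_congr_ae (hkap_ae K hK),
      integral_finset_sum _ (fun j hj => hcut_int _ _ (htle j K (Finset.mem_Icc.1 hj).1 hK).2)]
    have : ∀ j ∈ Icc 1 m,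
        ∫ x, (if x ≤ 1/((j:ℝ)*K) then c j else 0) * ψ x ∂μ
          = a j * (j:ℂ)^(-s) * ((K:ℂ)^(-w)/w) := by
      intro j hj
      rw [hcut_val _ _ (htle j K (Finset.mem_Icc.1 hj).1 hK).1
        (htle j K (Finset.mem_Icc.1 hj).1 hK).2]
      exact hterm K hK j hj
    rw [Finset.sum_congr rfl this, ← Finset.sum_mul, hP, zero_mul]
  -- measurability and L² facts for ψ
  have hbase_meas : AEStronglyMeasurable (fun x:ℝ => (x:ℂ)^(w-1)) μ := by
    refine ContinuousOn.aestronglyMeasurable ?_ measurableSet_Ioi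
    exact continuousOn_of_forall_continuousAt fun t ht =>
      Complex.continuousAt_ofReal_cpow_const _ _ (Or.inr (ne_of_gt ht))
  have hψ_meas : AEStronglyMeasurable ψ μ := hbase_meas.indicator measurableSet_Ioo
  set p : ℝ := 2*w.re - 2 with hpdef
  have hp1 : (-1:ℝ) < p := by rw [hpdef]; linarith
  have hsqpt : ∀ x, ‖ψ x‖^2 = Set.indicator (Set.Ioo (0:ℝ) 1) (fun x => x ^ p) x := by
    intro x
    by_cases h : x ∈ Set.Ioo (0:ℝ) 1
    · rw [hψdef, Set.indicator_of_mem h, Set.indicator_of_mem h, 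
        Complex.norm_cpow_eq_rpow_re_of_pos h.1]
      rw [show (w-1).re = w.re - 1 by simp]
      rw [← Real.rpow_natCast (x ^ (w.re-1)) 2, ← Real.rpow_mul h.1.le]
      congr 1
      rw [hpdef]; push_cast; ring
    · rw [hψdef, Set.indicator_of_notMem h, Set.indicator_of_notMem h]; simp
  have hsq_ind_int : Integrable (Set.indicator (Set.Ioo (0:ℝ) 1) (fun x : ℝ => x ^ p)) μ := by
    rw [integrable_indicator_iff measurableSet_Ioo, IntegrableOn,
      Measure.restrict_restrict measurableSet_Ioo,
      Set.inter_eq_left.2 Set.Ioo_subset_Ioi_self]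
    exact ((intervalIntegral.intervalIntegrable_rpow' (a := 0) (b := 1) hp1).1).mono_set
      Set.Ioo_subset_Ioc_self
  have hψ_sq_int : Integrable (fun x => ‖ψ x‖^2) μ :=
    hsq_ind_int.congr (ae_of_all _ fun x => (hsqpt x).symm)
  have hψ_mem : MemLp ψ 2 μ := (memLp_two_iff_integrable_sq_norm hψ_meas).2 hψ_sq_int
  have hp10 : (0:ℝ) < p + 1 := by linarith
  have hB : ∫ x, ‖ψ x‖^(2:ℝ) ∂μ = (2*w.re - 1)⁻¹ := by
    have hnp : ∀ x:ℝ, ‖ψ x‖^(2:ℝ) = ‖ψ x‖^(2:ℕ) := fun x => by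
      rw [← Real.rpow_natCast (‖ψ x‖) 2]; norm_num
    rw [integral_congr_ae (ae_of_all _ fun x => by rw [hnp x, hsqpt x])]
    rw [integral_indicator measurableSet_Ioo, Measure.restrict_restrict measurableSet_Ioo,
      Set.inter_eq_left.2 Set.Ioo_subset_Ioi_self, ← integral_Ioc_eq_integral_Ioo,
      ← intervalIntegral.integral_of_le zero_le_one, integral_rpow (Or.inl hp1)]
    rw [Real.one_rpow, Real.zero_rpow hp10.ne', sub_zero, hpdef]
    rw [show 2*w.re - 2 + 1 = 2*w.re - 1 by ring, one_div]
  -- Memℒp of the kappa functions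
  have hkapmem : ∀ K:ℕ, 1 ≤ K → MemLp (fun x => kappa a r (1/(K*x))) 2 μ := by
    intro K hK
    have hae : (fun x => kappa a r (1/(K*x))) =ᵐ[μ]
        (fun x => ∑ j ∈ Icc 1 m,
          Set.indicator (Set.Ioc (0:ℝ) (1/((j:ℝ)*K))) (fun _ => c j) x) := by
      filter_upwards [ae_restrict_mem measurableSet_Ioi] with x hx
      rw [hkap K hK x hx]
      refine Finset.sum_congr rfl fun j hj => ?_
      rw [Set.indicator_apply]
      exact if_congr ⟨fun h => ⟨hx, h⟩, fun h => h.2⟩ rfl rfl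
    rw [memLp_congr_ae hae]
    have hfin : ∀ j : ℕ, j ∈ Icc 1 m → MemLp
        ((Set.Ioc (0:ℝ) (1/((j:ℝ)*K))).indicator fun _ => c j) 2 μ := by
      intro j hj
      refine memLp_indicator_const 2 measurableSet_Ioc _ (Or.inr ?_)
      rw [hμ, Measure.restrict_apply measurableSet_Ioc]
      exact (lt_of_le_of_lt (measure_mono Set.inter_subset_left) measure_Ioc_lt_top).ne
    have hs := memLp_finsetSum' (μ := μ) (Icc 1 m) hfin
    exact (memLp_congr_ae (ae_of_all _ fun x => by simp [Finset.sum_apply])).1 hs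
  have hmem_ind : MemLp (Set.indicator (Set.Ioo (0:ℝ) 1) fun _ => (1:ℂ)) 2 μ := by
    refine memLp_indicator_const 2 measurableSet_Ioo _ (Or.inr ?_)
    rw [hμ, Measure.restrict_apply measurableSet_Ioo]
    exact (lt_of_le_of_lt (measure_mono Set.inter_subset_left) measure_Ioo_lt_top).ne
  -- the per-coefficient lower bound
  have key : ∀ (n:ℕ) (b : Fin n → ℂ),
      (2*w.re - 1) * ‖(1:ℂ)/w‖^2 ≤
      ∫ x, ‖Set.indicator (Set.Ioo (0:ℝ) 1) (fun _ => (1:ℂ)) x -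
        ∑ k : Fin n, b k * kappa a r (1 / (((k:ℕ)+1:ℕ) * x))‖^2 ∂μ := by
    intro n b
    set g : ℝ → ℂ := fun x => Set.indicator (Set.Ioo (0:ℝ) 1) (fun _ => (1:ℂ)) x -
        ∑ k : Fin n, b k * kappa a r (1 / (((k:ℕ)+1:ℕ) * x)) with hgdef
    have hK1 : ∀ k : Fin n, 1 ≤ (k:ℕ)+1 := fun k => Nat.le_add_left 1 _
    have hsum_mem : MemLp
        (fun x => ∑ k : Fin n, b k * kappa a r (1 / (((k:ℕ)+1:ℕ) * x))) 2 μ := by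
      have hs := memLp_finsetSum' (μ := μ) Finset.univ
        (fun (k : Fin n) _ => (hkapmem _ (hK1 k)).const_mul (b k))
      exact (memLp_congr_ae (ae_of_all _ fun x => by simp [Finset.sum_apply])).1 hs
    have hg_mem : MemLp g 2 μ := hmem_ind.sub hsum_mem
    have h1 : Integrable (fun x => Set.indicator (Set.Ioo (0:ℝ) 1) (fun _ => (1:ℂ)) x * ψ x) μ :=
      hψ_int.congr (ae_of_all _ fun x => (hind_mul x).symm)
    have h2 : ∀ k : Fin n,
        Integrable (fun x => b k * kappa a r (1/(((k:ℕ)+1:ℕ)*x)) * ψ x) μ := by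
      intro k
      have := (hkap_int _ (hK1 k)).const_mul (b k)
      exact this.congr (ae_of_all _ fun x => by ring)
    have hpair : ∫ x, g x * ψ x ∂μ = 1/w := by
      have hgx : ∀ x, g x * ψ x = Set.indicator (Set.Ioo (0:ℝ) 1) (fun _ => (1:ℂ)) x * ψ x
          - ∑ k : Fin n, b k * kappa a r (1/(((k:ℕ)+1:ℕ)*x)) * ψ x := by
        intro x; rw [hgdef]; simp only [sub_mul, Finset.sum_mul]
      rw [integral_congr_ae (ae_of_all _ hgx),
        integral_sub h1 (integrable_finset_sum _ fun k _ => h2 k),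
        integral_finset_sum _ (fun k _ => h2 k)]
      have hz : ∀ k : Fin n, ∫ x, b k * kappa a r (1/(((k:ℕ)+1:ℕ)*x)) * ψ x ∂μ = 0 := by
        intro k
        rw [show (fun x => b k * kappa a r (1/(((k:ℕ)+1:ℕ)*x)) * ψ x)
            = fun x => b k * (kappa a r (1/(((k:ℕ)+1:ℕ)*x)) * ψ x) from funext fun x => by ring,
          integral_const_mul, hkap_val _ (hK1 k), mul_zero]
      rw [Finset.sum_congr rfl (fun k _ => hz k), Finset.sum_const_zero, sub_zero,
        integral_congr_ae (ae_of_all _ fun x => hind_mul x), hψ_val]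
    have hnorm1 : ‖(1:ℂ)/w‖ ≤ ∫ x, ‖g x‖ * ‖ψ x‖ ∂μ := by
      rw [show ∫ x, ‖g x‖ * ‖ψ x‖ ∂μ = ∫ x, ‖g x * ψ x‖ ∂μ from
        integral_congr_ae (ae_of_all _ fun x => (norm_mul _ _).symm)]
      calc ‖(1:ℂ)/w‖ = ‖∫ x, g x * ψ x ∂μ‖ := by rw [hpair]
        _ ≤ ∫ x, ‖g x * ψ x‖ ∂μ := norm_integral_le_integral_norm _
    have hg_norm_mem : MemLp (fun x => ‖g x‖) (ENNReal.ofReal 2) μ := by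
      rw [ENNReal.ofReal_ofNat]
      exact hg_mem.norm
    have hψ_norm_mem : MemLp (fun x => ‖ψ x‖) (ENNReal.ofReal 2) μ := by
      rw [ENNReal.ofReal_ofNat]
      exact hψ_mem.norm
    have hCS := integral_mul_le_Lp_mul_Lq_of_nonneg (μ := μ)
      (Real.HolderConjugate.two_two)
      (ae_of_all _ fun x => norm_nonneg (g x)) (ae_of_all _ fun x => norm_nonneg (ψ x))
      hg_norm_mem hψ_norm_mem
    set A : ℝ := ∫ x, ‖g x‖^(2:ℝ) ∂μ with hA
    have hA0 : 0 ≤ A := integral_nonneg fun x => Real.rpow_nonneg (norm_nonneg _) _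
    have hB0 : (0:ℝ) < 2*w.re - 1 := by linarith
    have hchain : ‖(1:ℂ)/w‖ ≤ A^((1:ℝ)/2) * ((2*w.re-1)⁻¹)^((1:ℝ)/2) := by
      refine hnorm1.trans (hCS.trans_eq ?_)
      rw [hB]
    have hsq : ‖(1:ℂ)/w‖^2 ≤ A * (2*w.re-1)⁻¹ := by
      have hx := mul_le_mul hchain hchain (norm_nonneg _) (by positivity)
      calc ‖(1:ℂ)/w‖^2 = ‖(1:ℂ)/w‖ * ‖(1:ℂ)/w‖ := by ring
        _ ≤ (A^((1:ℝ)/2) * ((2*w.re-1)⁻¹)^((1:ℝ)/2)) *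
            (A^((1:ℝ)/2) * ((2*w.re-1)⁻¹)^((1:ℝ)/2)) := hx
        _ = (A^((1:ℝ)/2) * A^((1:ℝ)/2)) *
            (((2*w.re-1)⁻¹)^((1:ℝ)/2) * ((2*w.re-1)⁻¹)^((1:ℝ)/2)) := by ring
        _ = A * (2*w.re-1)⁻¹ := by
            rw [← Real.rpow_add_of_nonneg hA0 (by norm_num) (by norm_num),
              ← Real.rpow_add_of_nonneg (by positivity) (by norm_num) (by norm_num)]
            norm_num
    have hAle : (2*w.re-1) * ‖(1:ℂ)/w‖^2 ≤ A := by
      have h := mul_le_mul_of_nonneg_left hsq hB0.le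
      calc (2*w.re-1) * ‖(1:ℂ)/w‖^2 ≤ (2*w.re-1) * (A * (2*w.re-1)⁻¹) := h
        _ = A := by field_simp
    have hAeq : A = ∫ x, ‖g x‖^2 ∂μ := integral_congr_ae (ae_of_all _ fun x => by
      show ‖g x‖ ^ (2:ℝ) = ‖g x‖ ^ (2:ℕ)
      rw [← Real.rpow_natCast (‖g x‖) 2]; norm_num)
    exact hAeq ▸ hAle
  -- conclusion
  set ε : ℝ := (2*w.re - 1) * ‖(1:ℂ)/w‖^2 with hε
  have hεpos : 0 < ε := by
    rw [hε]
    have h1 : (0:ℝ) < 2*w.re - 1 := by linarith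
    exact mul_pos h1 (pow_pos (norm_pos_iff.2 (one_div_ne_zero hw0)) 2)
  have hlow : ∀ n : ℕ, Real.sqrt ε ≤ Real.sqrt (baezDuarteDistSq a r n) := by
    intro n
    apply Real.sqrt_le_sqrt
    rw [baezDuarteDistSq]
    refine le_ciInf fun b => ?_
    have hk := key n b
    rw [hμ] at hk
    exact hk
  have hle0 : Real.sqrt ε ≤ 0 := ge_of_tendsto' hd hlow
  exact absurd hle0 (not_le.2 (Real.sqrt_pos.2 hεpos))
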